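/- arXiv:2507.06198 — 2 statements merged into one kernel-verified Lean document; each statement's English description precedes it below -/
import Mathlib

section
/- For every natural number n and every real x, the integral over the real line of e^{-y^2/2}·He_n(x + y) dy equals √(2π)·x^n. -/
open Nat MeasureTheory

lemma integrable_gauss_poly (P : Polynomial ℝ) :
    Integrable fun y : ℝ => Real.exp (-y ^ 2 / 2) * P.eval y := by
  open Polynomial in
  induction P using Polynomial.induction_on' with
  | add p q hp hq => simpa [mul_add, Pi.add_def] using hp.add hq
  | monomial k a =>
    have h : Integrable fun y : ℝ => y ^ k * Real.exp (-(1/2) * y ^ 2) := by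
      have h := integrable_rpow_mul_exp_neg_mul_sq (b := 1/2) (by norm_num) (s := (k:ℝ))
        (lt_of_lt_of_le neg_one_lt_zero (Nat.cast_nonneg k))
      simpa [Real.rpow_natCast] using h
    have heq : (fun y : ℝ => Real.exp (-y ^ 2 / 2) * ((monomial k a).eval y))
        = fun y : ℝ => a * (y ^ k * Real.exp (-(1/2) * y ^ 2)) := by
      funext y
      rw [eval_monomial, show -y ^ 2 / 2 = -(1/2) * y ^ 2 by ring]
      ring
    rw [heq]
    exact h.const_mul a

lemma gauss_deriv_key (P : Polynomial ℝ) :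
    ∫ y : ℝ, Real.exp (-y ^ 2 / 2) * (y * P.eval y - P.derivative.eval y) = 0 := by
  open Polynomial in
  have hne : ∫ y : ℝ,
      -(Real.exp (-y ^ 2 / 2) * (y * P.eval y - P.derivative.eval y)) = 0 := by
    apply integral_eq_zero_of_hasDerivAt_of_integrable
      (f := fun y : ℝ => Real.exp (-y ^ 2 / 2) * P.eval y)
    · intro y
      have h0 : HasDerivAt (fun y : ℝ => -y ^ 2 / 2) (-y) y := by
        have := ((hasDerivAt_pow 2 y).neg.div_const 2)
        exact this.congr_deriv (by ring)
      have h1 : HasDerivAt (fun y : ℝ => Real.exp (-y ^ 2 / 2))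
          (Real.exp (-y ^ 2 / 2) * -y) y := h0.exp
      have h2 := P.hasDerivAt y
      have := h1.mul h2
      exact this.congr_deriv (by ring)
    · have h := integrable_gauss_poly (Polynomial.derivative P - X * P)
      refine h.congr (Filter.Eventually.of_forall fun y => ?_)
      simp only [eval_sub, eval_mul, eval_X]
      ring
    · exact integrable_gauss_poly P
  rw [integral_neg, neg_eq_zero] at hne
  exact hne

noncomputable def He (n : ℕ) (x : ℝ) : ℝ := Polynomial.aeval x (Polynomial.hermite n)

noncomputable def Hp (n : ℕ) : Polynomial ℝ := (Polynomial.hermite n).map (algebraMap ℤ ℝ)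

lemma He_eq (n : ℕ) (z : ℝ) : He n z = (Hp n).eval z := by
  rw [He, Hp, Polynomial.aeval_def, Polynomial.eval_map]

lemma Hp_succ (n : ℕ) :
    Hp (n + 1) = Polynomial.X * Hp n - Polynomial.derivative (Hp n) := by
  rw [Hp, Polynomial.hermite_succ]
  simp [Hp, Polynomial.map_mul, Polynomial.map_sub, Polynomial.derivative_map]

/-- Gaussian average of a shifted Hermite polynomial is a monomial. -/
theorem hermite_gaussian_shift (n : ℕ) (x : ℝ) :
    ∫ y : ℝ, Real.exp (-y ^ 2 / 2) * He n (x + y) =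
      Real.sqrt (2 * Real.pi) * x ^ n := by
  open Polynomial in
  induction n with
  | zero =>
    have h := integral_gaussian (1/2 : ℝ)
    rw [show (∫ y : ℝ, Real.exp (-y ^ 2 / 2) * He 0 (x + y))
        = ∫ y : ℝ, Real.exp (-(1/2) * y ^ 2) from by
      congr 1; funext y
      rw [He, Polynomial.hermite_zero, show -y ^ 2 / 2 = -(1/2) * y ^ 2 by ring]
      simp]
    rw [h, pow_zero, mul_one, show Real.pi / (1/2 : ℝ) = 2 * Real.pi by ring]
  | succ n ih =>
    set S : Polynomial ℝ := (Hp n).comp (C x + X) with hSdef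
    have hS : ∀ y : ℝ, S.eval y = He n (x + y) := by
      intro y; rw [He_eq, hSdef, eval_comp]; simp
    have hS' : ∀ y : ℝ, S.derivative.eval y
        = (Polynomial.derivative (Hp n)).eval (x + y) := by
      intro y
      rw [hSdef, Polynomial.derivative_comp]
      simp [eval_comp]
    have hint1 : Integrable (fun y : ℝ => Real.exp (-y ^ 2 / 2) * S.eval y) :=
      integrable_gauss_poly S
    have hint2 : Integrable (fun y : ℝ =>
        Real.exp (-y ^ 2 / 2) * (y * S.eval y - S.derivative.eval y)) := by
      have h := integrable_gauss_poly (X * S - Polynomial.derivative S)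
      refine h.congr (Filter.Eventually.of_forall fun y => ?_)
      simp only [eval_sub, eval_mul, eval_X]
    calc ∫ y : ℝ, Real.exp (-y ^ 2 / 2) * He (n + 1) (x + y)
        = ∫ y : ℝ, (x * (Real.exp (-y ^ 2 / 2) * S.eval y)
            + Real.exp (-y ^ 2 / 2) * (y * S.eval y - S.derivative.eval y)) := by
          congr 1; funext y
          rw [He_eq, Hp_succ, eval_sub, eval_mul, eval_X, ← He_eq, ← hS y, ← hS' y]
          ring
      _ = x * (∫ y : ℝ, Real.exp (-y ^ 2 / 2) * S.eval y)
            + ∫ y : ℝ, Real.exp (-y ^ 2 / 2) * (y * S.eval y - S.derivative.eval y) := by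
          rw [integral_add (hint1.const_mul x) hint2, integral_const_mul]
      _ = x * (Real.sqrt (2 * Real.pi) * x ^ n) + 0 := by
          rw [gauss_deriv_key S]
          congr 2
          rw [show (fun y : ℝ => Real.exp (-y ^ 2 / 2) * S.eval y)
              = fun y : ℝ => Real.exp (-y ^ 2 / 2) * He n (x + y) from
            funext fun y => by rw [hS y]]
          exact ih
      _ = Real.sqrt (2 * Real.pi) * x ^ (n + 1) := by ring
end

section
/- For every natural number n and every real x, x^n = n! · Σ_{0 ≤ m ≤ n/2} (1 / (2^m · m! · (n-2m)!)) · He_{n-2m}(x). -/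
open Nat

open Polynomial Finset in
private lemma deriv_hermite (n : ℕ) :
    derivative (hermite n) = (n : Polynomial ℤ) * hermite (n - 1) := by
  induction n using Nat.strong_induction_on with
  | _ n ih =>
    match n with
    | 0 => simp [hermite_zero]
    | 1 => simp [hermite_one, hermite_zero]
    | (k+2) =>
      have ih1 := ih (k+1) (by omega)
      have ih0 := ih k (by omega)
      simp only [Nat.add_sub_cancel, Nat.succ_sub_one] at ih1 ⊢
      rw [hermite_succ (k+1), derivative_sub, derivative_mul, derivative_X, ih1,
        derivative_mul, derivative_natCast, ih0]
      rw [hermite_succ k, ih0]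
      cases k with
      | zero => simp [hermite_zero]; ring
      | succ j =>
        simp only [Nat.succ_sub_one]
        push_cast
        ring

open Polynomial Finset in
private lemma He_mul (k : ℕ) (x : ℝ) : x * He k x = He (k+1) x + (k : ℝ) * He (k-1) x := by
  unfold He
  rw [hermite_succ, deriv_hermite]
  simp [mul_comm]

noncomputable def Cf (n m : ℕ) : ℝ := (n ! : ℝ) / ((2:ℝ)^m * (m ! : ℝ) * ((n - 2*m)! : ℝ))

lemma Cf_zero (n : ℕ) : Cf n 0 = 1 := by
  simp [Cf]
  exact n.factorial_ne_zero

lemma Cf_A (m k : ℕ) : Cf (2*m+k+3) (m+1) = Cf (2*m+k+2) (m+1) + ((k:ℝ)+2) * Cf (2*m+k+2) m := by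
  unfold Cf
  have h1 : 2*m+k+3 - 2*(m+1) = k+1 := by omega
  have h2 : 2*m+k+2 - 2*(m+1) = k := by omega
  have h3 : 2*m+k+2 - 2*m = k+2 := by omega
  rw [h1, h2, h3]
  rw [show 2*m+k+3 = (2*m+k+2)+1 by ring, Nat.factorial_succ, Nat.factorial_succ (k+1),
    Nat.factorial_succ k, Nat.factorial_succ m, pow_succ]
  have e1 : ((2*m+k+2)! : ℝ) ≠ 0 := Nat.cast_ne_zero.mpr (Nat.factorial_ne_zero _)
  have e2 : ((m)! : ℝ) ≠ 0 := Nat.cast_ne_zero.mpr (Nat.factorial_ne_zero _)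
  have e4 : ((k)! : ℝ) ≠ 0 := Nat.cast_ne_zero.mpr (Nat.factorial_ne_zero _)
  have e3 : (2:ℝ)^m ≠ 0 := by positivity
  push_cast
  field_simp
  ring

lemma Cf_B (t : ℕ) : Cf (2*t+2) (t+1) = Cf (2*t+1) t := by
  unfold Cf
  have h1 : 2*t+2 - 2*(t+1) = 0 := by omega
  have h2 : 2*t+1 - 2*t = 1 := by omega
  rw [h1, h2]
  rw [show 2*t+2 = (2*t+1)+1 by ring, Nat.factorial_succ, Nat.factorial_succ t, pow_succ]
  have e1 : ((2*t+1)! : ℝ) ≠ 0 := Nat.cast_ne_zero.mpr (Nat.factorial_ne_zero _)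
  have e2 : ((t)! : ℝ) ≠ 0 := Nat.cast_ne_zero.mpr (Nat.factorial_ne_zero _)
  have e3 : (2:ℝ)^t ≠ 0 := by positivity
  field_simp
  push_cast
  ring

open Polynomial Finset in
private lemma key (n : ℕ) (x : ℝ) :
    x ^ n = ∑ m ∈ Finset.range (n/2+1), Cf n m * He (n - 2*m) x := by
  induction n generalizing x with
  | zero => simp [Cf_zero, He, hermite_zero]
  | succ n ih =>
    have step : x ^ (n+1) = ∑ m ∈ Finset.range (n/2+1),
        (Cf n m * He (n-2*m+1) x + ((n-2*m : ℕ):ℝ) * (Cf n m * He (n-2*m-1) x)) := by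
      rw [pow_succ, ih, Finset.sum_mul]
      refine Finset.sum_congr rfl fun m _ => ?_
      rw [mul_assoc, mul_comm (He _ x) x, He_mul]
      ring
    rw [step]
    rcases Nat.even_or_odd n with ⟨t, ht⟩ | ⟨t, ht⟩
    · -- n = 2t
      subst ht
      have hd1 : (t + t) / 2 = t := by omega
      have hd2 : (t + t + 1) / 2 = t := by omega
      rw [hd1, hd2]
      rw [Finset.sum_add_distrib, Finset.sum_range_succ
        (fun m => ((t+t-2*m : ℕ):ℝ) * (Cf (t+t) m * He (t+t-2*m-1) x))]
      rw [Finset.sum_range_succ' (fun m => Cf (t+t) m * He (t+t-2*m+1) x) t,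
        Finset.sum_range_succ' (fun j => Cf (t+t+1) j * He (t+t+1-2*j) x) t]
      have hz : ((t+t-2*t : ℕ):ℝ) = 0 := by
        rw [show t+t-2*t = 0 by omega]; simp
      rw [hz, zero_mul, add_zero]
      have h0 : Cf (t+t+1) 0 * He (t+t+1-2*0) x = Cf (t+t) 0 * He (t+t-2*0+1) x := by
        rw [Cf_zero, Cf_zero]; norm_num
      rw [h0, add_right_comm]
      congr 1
      rw [← Finset.sum_add_distrib]
      refine Finset.sum_congr rfl fun i hi => ?_
      simp only [Finset.mem_range] at hi
      have hk : t+t = 2*i + (t+t-2*i-2) + 2 := by omega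
      have hA := Cf_A i (t+t-2*i-2)
      have e1 : 2*i + (t+t-2*i-2) + 3 = t+t+1 := by omega
      have e2 : 2*i + (t+t-2*i-2) + 2 = t+t := by omega
      rw [e1, e2] at hA
      have e3 : t+t+1-2*(i+1) = t+t-2*i-1 := by omega
      have e4 : t+t-2*(i+1)+1 = t+t-2*i-1 := by omega
      have e5 : ((t+t-2*i : ℕ):ℝ) = ((t+t-2*i-2 : ℕ):ℝ) + 2 := by
        rw [show t+t-2*i = (t+t-2*i-2)+2 by omega]; push_cast; ring
      rw [e3, e4, hA, e5]
      ring
    · -- n = 2t+1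
      subst ht
      have hd1 : (2*t+1) / 2 = t := by omega
      have hd2 : (2*t+1+1) / 2 = t+1 := by omega
      rw [hd1, hd2]
      rw [Finset.sum_add_distrib, Finset.sum_range_succ
        (fun m => ((2*t+1-2*m : ℕ):ℝ) * (Cf (2*t+1) m * He (2*t+1-2*m-1) x))]
      rw [Finset.sum_range_succ' (fun m => Cf (2*t+1) m * He (2*t+1-2*m+1) x) t,
        Finset.sum_range_succ' (fun j => Cf (2*t+1+1) j * He (2*t+1+1-2*j) x) (t+1),
        Finset.sum_range_succ (fun i => Cf (2*t+2) (i+1) * He (2*t+1+1-2*(i+1)) x) t]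
      have h0 : Cf (2*t+1+1) 0 * He (2*t+1+1-2*0) x = Cf (2*t+1) 0 * He (2*t+1-2*0+1) x := by
        rw [Cf_zero, Cf_zero]; norm_num
      have htop : Cf (2*t+2) (t+1) * He (2*t+1+1-2*(t+1)) x
          = ((2*t+1-2*t : ℕ):ℝ) * (Cf (2*t+1) t * He (2*t+1-2*t-1) x) := by
        rw [Cf_B, show 2*t+1+1-2*(t+1) = 0 by omega, show 2*t+1-2*t-1 = 0 by omega,
          show 2*t+1-2*t = 1 by omega]
        push_cast; ring
      have hsum : (∑ i ∈ Finset.range t, Cf (2*t+1+1) (i+1) * He (2*t+1+1-2*(i+1)) x)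
          = ∑ i ∈ Finset.range t, (Cf (2*t+1) (i+1) * He (2*t+1-2*(i+1)+1) x
            + ((2*t+1-2*i : ℕ):ℝ) * (Cf (2*t+1) i * He (2*t+1-2*i-1) x)) := by
        refine Finset.sum_congr rfl fun i hi => ?_
        simp only [Finset.mem_range] at hi
        have hA := Cf_A i (2*t-2*i-1)
        have e1 : 2*i + (2*t-2*i-1) + 3 = 2*t+2 := by omega
        have e2 : 2*i + (2*t-2*i-1) + 2 = 2*t+1 := by omega
        rw [e1, e2] at hA
        have e3 : 2*t+1+1-2*(i+1) = 2*t-2*i := by omega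
        have e4 : 2*t+1-2*(i+1)+1 = 2*t-2*i := by omega
        have e6 : 2*t+1-2*i-1 = 2*t-2*i := by omega
        have e5 : ((2*t+1-2*i : ℕ):ℝ) = ((2*t-2*i-1 : ℕ):ℝ) + 2 := by
          rw [show 2*t+1-2*i = (2*t-2*i-1)+2 by omega]; push_cast; ring
        rw [e3, e4, e6, show (2*t+1+1) = 2*t+2 by ring, hA, e5]
        ring
      rw [hsum, Finset.sum_add_distrib, h0, htop]
      ring

/-- Expansion of the monomial `x^n` in probabilist's Hermite polynomials. -/
theorem monomial_hermite_expansion (n : ℕ) (x : ℝ) :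
    x ^ n = (n ! : ℝ) * ∑ m ∈ Finset.range (n / 2 + 1),
      (1 / ((2 : ℝ) ^ m * (m ! : ℝ) * ((n - 2 * m)! : ℝ))) * He (n - 2 * m) x := by
  rw [key, Finset.mul_sum]
  refine Finset.sum_congr rfl fun m _ => ?_
  unfold Cf
  ring
end
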